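/- arXiv:2305.07295 — 4 statements merged into one kernel-verified Lean document; each statement's English description precedes it below -/
import Mathlib

section
/- Let δ ≥ 0 be a real number, n a natural number, a : Fin n → ℝ a sequence, and P : Fin n → Prop a decidable predicate. Suppose that for every i : Fin n, if the set {j : Fin n | j < i ∧ P j} is empty then a i ≤ δ, and otherwise a i ≤ δ + max { a j | j < i ∧ P j }. Then for every i : Fin n, a i ≤ δ · ((card {j | j < i ∧ P j}) + 1). In particular, a i ≤ δ · (k + 1) for all i, where k = card {j : Fin n | P j}. -/
theorem stmt_3 (δ : ℝ) (hδ : 0 ≤ δ) (n : ℕ) (a : Fin n → ℝ)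
    (P : Fin n → Prop) [DecidablePred P]
    (h0 : ∀ i : Fin n, (Finset.univ.filter (fun j => j < i ∧ P j)) = ∅ → a i ≤ δ)
    (h1 : ∀ i : Fin n, ∀ h : (Finset.univ.filter (fun j => j < i ∧ P j)).Nonempty,
      a i ≤ δ + (Finset.univ.filter (fun j => j < i ∧ P j)).sup' h a) :
    (∀ i : Fin n,
      a i ≤ δ * (((Finset.univ.filter (fun j => j < i ∧ P j)).card : ℝ) + 1)) ∧
    (∀ i : Fin n, a i ≤ δ * (((Finset.univ.filter (fun j => P j)).card : ℝ) + 1)) := by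
  have main' : ∀ m : ℕ, ∀ i : Fin n, i.val = m →
      a i ≤ δ * (((Finset.univ.filter (fun j => j < i ∧ P j)).card : ℝ) + 1) := by
    intro m
    induction m using Nat.strong_induction_on with
    | _ m ihm =>
      intro i hi
      have ih : ∀ j : Fin n, j < i → a j ≤ δ * (((Finset.univ.filter (fun k => k < j ∧ P k)).card : ℝ) + 1) :=
        fun j hj => ihm j.val (hi ▸ hj) j rfl
      by_cases hne : (Finset.univ.filter (fun j => j < i ∧ P j)).Nonempty
      · have key : ∀ j ∈ Finset.univ.filter (fun j => j < i ∧ P j),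
            a j ≤ δ * ((Finset.univ.filter (fun k => k < i ∧ P k)).card : ℝ) := by
          intro j hj
          simp only [Finset.mem_filter] at hj
          obtain ⟨-, hji, hPj⟩ := hj
          have h2 := ih j hji
          have hsub : (Finset.univ.filter (fun k => k < j ∧ P k)) ⊆
              (Finset.univ.filter (fun k => k < i ∧ P k)).erase j := by
            intro k hk
            simp only [Finset.mem_filter, Finset.mem_erase] at hk ⊢
            refine ⟨fun h => ?_, Finset.mem_univ k, lt_trans hk.2.1 hji, hk.2.2⟩
            subst h; exact absurd hk.2.1 (lt_irrefl k)
          have hcard : (Finset.univ.filter (fun k => k < j ∧ P k)).card + 1 ≤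
              (Finset.univ.filter (fun k => k < i ∧ P k)).card := by
            have := Finset.card_le_card hsub
            have herase : ((Finset.univ.filter (fun k => k < i ∧ P k)).erase j).card =
                (Finset.univ.filter (fun k => k < i ∧ P k)).card - 1 :=
              Finset.card_erase_of_mem (by simp [hji, hPj])
            have hmem : j ∈ Finset.univ.filter (fun k => k < i ∧ P k) := by simp [hji, hPj]
            have hpos := Finset.card_pos.mpr ⟨j, hmem⟩
            omega
          calc a j ≤ δ * (((Finset.univ.filter (fun k => k < j ∧ P k)).card : ℝ) + 1) := h2
            _ ≤ δ * ((Finset.univ.filter (fun k => k < i ∧ P k)).card : ℝ) := by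
                apply mul_le_mul_of_nonneg_left _ hδ
                exact_mod_cast hcard
        have hsup := Finset.sup'_le hne a key
        have := h1 i hne
        linarith
      · have := h0 i (Finset.not_nonempty_iff_eq_empty.mp hne)
        rw [Finset.not_nonempty_iff_eq_empty.mp hne]
        simp
        nlinarith
  have main : ∀ i : Fin n,
      a i ≤ δ * (((Finset.univ.filter (fun j => j < i ∧ P j)).card : ℝ) + 1) :=
    fun i => main' i.val i rfl
  refine ⟨main, fun i => le_trans (main i) ?_⟩
  apply mul_le_mul_of_nonneg_left _ hδ
  have : (Finset.univ.filter (fun j => j < i ∧ P j)).card ≤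
      (Finset.univ.filter (fun j => P j)).card := by
    apply Finset.card_le_card
    intro k hk
    simp only [Finset.mem_filter] at hk ⊢
    exact ⟨Finset.mem_univ k, hk.2.2⟩
  have h2 : ((Finset.univ.filter (fun j => j < i ∧ P j)).card : ℝ) ≤
      ((Finset.univ.filter (fun j => P j)).card : ℝ) := Nat.cast_le.mpr this
  linarith
end

section
/- Let (Q, q̂, E) and (Q, q̂, E') be guarded weighted graphs over the same locations and with the same edges (same sources, targets, and weights), except that for each edge e the guard in E' satisfies guard'(e) ∈ {guard(e), none} (i.e., E' is obtained from E by erasing some guards). Let F and F' be the corresponding operators on Q → ℝ≥0∞. Then F'(T) ≤ F(T) pointwise for every T : Q → ℝ≥0∞, and consequently the least fixed point of F' is pointwise ≤ the least fixed point of F, and the greatest fixed point of F' is pointwise ≤ the greatest fixed point of F. -/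
open scoped ENNReal

/-- Guard threshold: `0` for an unguarded edge, `T g` for an edge guarded by `g`. -/
def theta {Q E : Type*} (guard : E → Option Q) (T : Q → ℝ≥0∞) (e : E) : ℝ≥0∞ :=
  (guard e).elim 0 T

/-- The minimal-reachability-time operator of a guarded weighted graph. -/
noncomputable def Fop {Q E : Type*} [DecidableEq Q] (qhat : Q) (src tgt : E → Q)
    (w : E → NNReal) (guard : E → Option Q) (T : Q → ℝ≥0∞) : Q → ℝ≥0∞ :=
  fun q => if q = qhat then 0
    else ⨅ e : { e : E // tgt e = q },
      max (T (src e.1) + (w e.1 : ℝ≥0∞)) (theta guard T e.1)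

private lemma theta_mono {Q E : Type*} (guard : E → Option Q) {T T' : Q → ℝ≥0∞}
    (h : T ≤ T') (e : E) : theta guard T e ≤ theta guard T' e := by
  unfold theta
  cases guard e with
  | none => simp
  | some g => exact h g

private lemma Fop_mono {Q E : Type*} [DecidableEq Q] (qhat : Q) (src tgt : E → Q)
    (w : E → NNReal) (guard : E → Option Q) :
    Monotone (Fop qhat src tgt w guard) := by
  intro T T' h q
  unfold Fop
  split
  · exact le_refl 0
  · exact iInf_mono fun e => max_le_max (add_le_add_left (h _) _) (theta_mono guard h e.1)

noncomputable def FopHom {Q E : Type*} [DecidableEq Q] (qhat : Q) (src tgt : E → Q)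
    (w : E → NNReal) (guard : E → Option Q) : (Q → ℝ≥0∞) →o (Q → ℝ≥0∞) :=
  ⟨Fop qhat src tgt w guard, Fop_mono qhat src tgt w guard⟩

theorem stmt_10 {Q E : Type*} [Fintype Q] [Fintype E] [DecidableEq Q]
    (qhat : Q) (src tgt : E → Q) (w : E → NNReal)
    (guard guard' : E → Option Q)
    (herase : ∀ e : E, guard' e = guard e ∨ guard' e = none) :
    (∀ T : Q → ℝ≥0∞, Fop qhat src tgt w guard' T ≤ Fop qhat src tgt w guard T) ∧
    (∀ T T' : Q → ℝ≥0∞,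
      IsLeast { S | Fop qhat src tgt w guard S = S } T →
      IsLeast { S | Fop qhat src tgt w guard' S = S } T' → T' ≤ T) ∧
    (∀ T T' : Q → ℝ≥0∞,
      IsGreatest { S | Fop qhat src tgt w guard S = S } T →
      IsGreatest { S | Fop qhat src tgt w guard' S = S } T' → T' ≤ T) := by
  have hstep : ∀ T : Q → ℝ≥0∞, Fop qhat src tgt w guard' T ≤ Fop qhat src tgt w guard T := by
    intro T q
    unfold Fop
    split
    · exact le_refl 0
    · refine iInf_mono fun e => max_le_max le_rfl ?_
      unfold theta
      rcases herase e.1 with h | h <;> rw [h]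
      simp
  refine ⟨hstep, ?_, ?_⟩
  · intro T T' hT hT'
    set F := FopHom qhat src tgt w guard
    set F' := FopHom qhat src tgt w guard'
    have h1 : T' ≤ OrderHom.lfp F' := hT'.2 (OrderHom.map_lfp F')
    have h2 : OrderHom.lfp F' ≤ T := OrderHom.lfp_le F' ((hstep T).trans hT.1.le)
    exact h1.trans h2
  · intro T T' hT hT'
    set F := FopHom qhat src tgt w guard
    set F' := FopHom qhat src tgt w guard'
    have h1 : T' ≤ OrderHom.gfp F := OrderHom.le_gfp F (hT'.1.ge.trans (hstep T'))
    have h2 : OrderHom.gfp F ≤ T := hT.2 (OrderHom.map_gfp F)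
    exact h1.trans h2
end

section
/- Let (Q, q̂, E) be a guarded weighted graph and T : Q → ℝ≥0∞ a fixed point of F. Let (e_1, …, e_m; t_1, …, t_m) be a T-feasible timed path to a location q, i.e., e_1, …, e_m is a path with src e_1 = q̂, tgt e_m = q, tgt e_i = src e_{i+1}, the crossing times satisfy t_1 ≥ w e_1, t_{i+1} ≥ t_i + w e_{i+1} for all i, and whenever guard e_i = some g then T g ≤ t_i (in particular T g < ∞). Then T q ≤ t_m, i.e., no feasible timed path can reach q strictly earlier than the fixed-point value at q. -/
open scoped ENNReal

/-- A `T`-feasible timed path to `q`: a path `es` from `qhat` to `q` with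
crossing times `ts` respecting edge weights and guard thresholds given by `T`. -/
def Feasible {Q E : Type*} (qhat : Q) (src tgt : E → Q) (w : E → NNReal)
    (guard : E → Option Q) (T : Q → ℝ≥0∞) (q : Q) (m : ℕ) (hm : 0 < m)
    (es : Fin m → E) (ts : Fin m → NNReal) : Prop :=
  src (es ⟨0, hm⟩) = qhat ∧
  tgt (es ⟨m - 1, Nat.sub_lt hm Nat.one_pos⟩) = q ∧
  (∀ i : ℕ, ∀ h : i + 1 < m, tgt (es ⟨i, by omega⟩) = src (es ⟨i + 1, h⟩)) ∧
  w (es ⟨0, hm⟩) ≤ ts ⟨0, hm⟩ ∧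
  (∀ i : ℕ, ∀ h : i + 1 < m, ts ⟨i, by omega⟩ + w (es ⟨i + 1, h⟩) ≤ ts ⟨i + 1, h⟩) ∧
  (∀ i : Fin m, ∀ g : Q, guard (es i) = some g → T g ≤ (ts i : ℝ≥0∞))

theorem stmt_11 {Q E : Type*} [Fintype Q] [Fintype E] [DecidableEq Q]
    (qhat : Q) (src tgt : E → Q) (w : E → NNReal) (guard : E → Option Q)
    (T : Q → ℝ≥0∞) (hT : Fop qhat src tgt w guard T = T)
    (q : Q) (m : ℕ) (hm : 0 < m) (es : Fin m → E) (ts : Fin m → NNReal)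
    (hfeas : Feasible qhat src tgt w guard T q m hm es ts) :
    T q ≤ (ts ⟨m - 1, Nat.sub_lt hm Nat.one_pos⟩ : ℝ≥0∞) := by
  obtain ⟨hsrc0, htgt, hchain, hw0, hwt, hguard⟩ := hfeas
  have h0 : T qhat = 0 := by rw [← hT]; simp [Fop]
  have key : ∀ e : E, ∀ q' : Q, tgt e = q' →
      T q' ≤ max (T (src e) + (w e : ℝ≥0∞)) (theta guard T e) := by
    intro e q' he
    by_cases hq : q' = qhat
    · simp [hq, h0]
    · conv_lhs => rw [← hT]
      simp only [Fop, if_neg hq]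
      exact iInf_le (fun e' : { e : E // tgt e = q' } => max (T (src e'.1) + (w e'.1 : ℝ≥0∞)) (theta guard T e'.1)) ⟨e, he⟩
  have thle : ∀ i : Fin m, theta guard T (es i) ≤ (ts i : ℝ≥0∞) := by
    intro i
    cases hg : guard (es i) with
    | none => simp [theta, hg]
    | some g => simpa [theta, hg] using hguard i g hg
  have main : ∀ i : ℕ, ∀ h : i < m, T (tgt (es ⟨i, h⟩)) ≤ (ts ⟨i, h⟩ : ℝ≥0∞) := by
    intro i
    induction i with
    | zero =>
      intro h
      refine le_trans (key _ _ rfl) (max_le ?_ (thle _))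
      rw [hsrc0, h0, zero_add]
      exact_mod_cast hw0
    | succ n ih =>
      intro h
      refine le_trans (key _ _ rfl) (max_le ?_ (thle _))
      calc T (src (es ⟨n + 1, h⟩)) + (w (es ⟨n + 1, h⟩) : ℝ≥0∞)
          = T (tgt (es ⟨n, by omega⟩)) + (w (es ⟨n + 1, h⟩) : ℝ≥0∞) := by
            rw [hchain n h]
        _ ≤ (ts ⟨n, by omega⟩ : ℝ≥0∞) + (w (es ⟨n + 1, h⟩) : ℝ≥0∞) := by
            gcongr; exact ih _
        _ ≤ (ts ⟨n + 1, h⟩ : ℝ≥0∞) := by exact_mod_cast hwt n h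
  calc T q = T (tgt (es ⟨m - 1, Nat.sub_lt hm Nat.one_pos⟩)) := by rw [htgt]
    _ ≤ _ := main _ _
end

section
/- Let (Q, q̂, E) be a guarded weighted graph, let G ⊆ Q be the set of guard locations (those q for which some edge e has guard e = some q), and let g = card G. Let δ : ℝ≥0 and assume the restricted-distance hypothesis: for every subset S ⊆ G and every location q, if there exists a path from q̂ to q all of whose guarded edges have their guard in S, then there exists such a path of total weight at most δ. Let (T_n) be the staged sequence (T_0 = 0 at q̂ and ∞ elsewhere; T_{n+1} q = infimum of arrival times of T_n-feasible timed paths to q). Then for every n and every q, if T_n q < ∞ then T_n q ≤ δ · (g + 1). -/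
open scoped ENNReal

/-- The staged sequence `T_n` of guard-unlocking reachability times. -/
noncomputable def staged {Q E : Type*} [DecidableEq Q] (qhat : Q) (src tgt : E → Q)
    (w : E → NNReal) (guard : E → Option Q) : ℕ → Q → ℝ≥0∞
  | 0 => fun q => if q = qhat then 0 else ⊤
  | n + 1 => fun q => if q = qhat then 0 else
      ⨅ (m : ℕ) (hm : 0 < m) (es : Fin m → E) (ts : Fin m → NNReal)
        (_ : Feasible qhat src tgt w guard (staged qhat src tgt w guard n) q m hm es ts),
        (ts ⟨m - 1, Nat.sub_lt hm Nat.one_pos⟩ : ℝ≥0∞)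

/-- `PathTo qhat src tgt q es` : `es` is a finite edge path from `qhat` to `q`. -/
inductive PathTo {Q E : Type*} (qhat : Q) (src tgt : E → Q) : Q → List E → Prop
  | nil : PathTo qhat src tgt qhat []
  | cons {q : Q} {es : List E} (e : E) :
      PathTo qhat src tgt q es → src e = q → PathTo qhat src tgt (tgt e) (es ++ [e])

section AuxLemmas

variable {Q E : Type*} [DecidableEq Q]
  (qhat : Q) (src tgt : E → Q) (w : E → NNReal) (guard : E → Option Q)

lemma coe_sum_map (w : E → NNReal) (l : List E) :
    (((l.map w).sum : NNReal) : ℝ≥0∞) = (l.map fun e => ((w e : ℝ≥0∞))).sum := by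
  induction l with
  | nil => simp
  | cons a t ih => simp only [List.map_cons, List.sum_cons, ENNReal.coe_add, ih]

lemma staged_succ_eq (n : ℕ) (q : Q) :
    staged qhat src tgt w guard (n + 1) q = if q = qhat then 0 else
      ⨅ (m : ℕ) (hm : 0 < m) (es : Fin m → E) (ts : Fin m → NNReal)
        (_ : Feasible qhat src tgt w guard (staged qhat src tgt w guard n) q m hm es ts),
        (ts ⟨m - 1, Nat.sub_lt hm Nat.one_pos⟩ : ℝ≥0∞) := rfl

lemma staged_qhat (n : ℕ) : staged qhat src tgt w guard n qhat = 0 := by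
  cases n <;> simp [staged]

lemma staged_succ_le (n : ℕ) (q : Q) :
    staged qhat src tgt w guard (n + 1) q ≤ staged qhat src tgt w guard n q := by
  induction n generalizing q with
  | zero =>
    by_cases hq : q = qhat
    · subst hq; simp [staged]
    · simp [staged, hq]
  | succ n ih =>
    by_cases hq : q = qhat
    · subst hq; simp [staged]
    · rw [staged_succ_eq, staged_succ_eq, if_neg hq, if_neg hq]
      refine le_iInf fun m => le_iInf fun hm => le_iInf fun es => le_iInf fun ts =>
        le_iInf fun hfe => ?_
      obtain ⟨h1, h2, h3, h4, h5, h6⟩ := hfe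
      exact iInf_le_of_le m <| iInf_le_of_le hm <| iInf_le_of_le es <| iInf_le_of_le ts <|
        iInf_le _ ⟨h1, h2, h3, h4, h5, fun i g hg => (ih g).trans (h6 i g hg)⟩

lemma staged_anti (q : Q) : Antitone (fun n => staged qhat src tgt w guard n q) :=
  antitone_nat_of_succ_le fun n => staged_succ_le qhat src tgt w guard n q

lemma pathTo_nil_eq' {q : Q} {l : List E} (h : PathTo qhat src tgt q l) :
    l = [] → q = qhat := by
  induction h with
  | nil => intro; rfl
  | cons e hp hsrc ih => intro h; simp at h

lemma pathTo_nil_eq {q : Q} (h : PathTo qhat src tgt q []) : q = qhat :=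
  pathTo_nil_eq' qhat src tgt h rfl

lemma path_chain {q : Q} {l : List E} (h : PathTo qhat src tgt q l) :
    ∀ h0 : 0 < l.length,
      src (l.get ⟨0, h0⟩) = qhat ∧
      tgt (l.get ⟨l.length - 1, Nat.sub_lt h0 Nat.one_pos⟩) = q ∧
      ∀ i : ℕ, ∀ hi : i + 1 < l.length,
        tgt (l.get ⟨i, by omega⟩) = src (l.get ⟨i + 1, hi⟩) := by
  induction h with
  | nil => intro h0; simp at h0
  | @cons q' es e hp hsrc ih =>
    intro h0
    by_cases hes : es.length = 0
    · have he : es = [] := List.length_eq_zero_iff.mp hes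
      subst he
      have hq' : q' = qhat := pathTo_nil_eq qhat src tgt hp
      refine ⟨by simpa using hsrc.trans hq', by simp, ?_⟩
      intro i hi
      simp at hi
    · have hpos : 0 < es.length := Nat.pos_of_ne_zero hes
      obtain ⟨h1, h2, h3⟩ := ih hpos
      have hlen : (es ++ [e]).length = es.length + 1 := by simp
      refine ⟨?_, ?_, ?_⟩
      · rw [List.get_eq_getElem, List.getElem_append_left hpos]
        exact h1
      · have : (es ++ [e]).length - 1 = es.length := by simp
        rw [List.get_eq_getElem]
        simp only [this]
        rw [List.getElem_concat_length]
        rfl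
      · intro i hi
        rw [hlen] at hi
        by_cases hie : i + 1 < es.length
        · rw [List.get_eq_getElem, List.get_eq_getElem,
            List.getElem_append_left (by omega : i < es.length),
            List.getElem_append_left hie]
          exact h3 i hie
        · have hieq : i + 1 = es.length := by omega
          rw [List.get_eq_getElem, List.get_eq_getElem,
            List.getElem_append_left (by omega : i < es.length)]
          have : (es ++ [e])[i+1]'(by simpa [hlen] using hi) = e :=
            List.getElem_concat_length (l := es) (a := e) (i := i + 1) hieq _
          rw [this, hsrc, ← h2]
          have : es.length - 1 = i := by omega
          simp only [this, List.get_eq_getElem]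

lemma chain_path : ∀ (m : ℕ) (hm : 0 < m) (es : Fin m → E),
    src (es ⟨0, hm⟩) = qhat →
    (∀ i : ℕ, ∀ h : i + 1 < m, tgt (es ⟨i, by omega⟩) = src (es ⟨i + 1, h⟩)) →
    PathTo qhat src tgt (tgt (es ⟨m - 1, Nat.sub_lt hm Nat.one_pos⟩)) (List.ofFn es) := by
  intro m
  induction m with
  | zero => intro hm; omega
  | succ m ih =>
    intro hm es h0 hchain
    by_cases hm0 : m = 0
    · subst hm0
      have : List.ofFn es = [es ⟨0, hm⟩] := by
        simp [List.ofFn_succ]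
      rw [this]
      have := PathTo.cons (qhat := qhat) (src := src) (tgt := tgt) (q := qhat)
        (es := []) (es ⟨0, hm⟩) PathTo.nil h0
      simpa using this
    · have hmpos : 0 < m := Nat.pos_of_ne_zero hm0
      set es' : Fin m → E := fun i => es i.castSucc with hes'
      have h0' : src (es' ⟨0, hmpos⟩) = qhat := h0
      have hchain' : ∀ i : ℕ, ∀ h : i + 1 < m, tgt (es' ⟨i, by omega⟩) = src (es' ⟨i + 1, h⟩) :=
        fun i h => hchain i (by omega)
      have hp := ih hmpos es' h0' hchain'
      have hofn : List.ofFn es = List.ofFn es' ++ [es ⟨m, by omega⟩] := by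
        rw [List.ofFn_succ', List.concat_eq_append]
        rfl
      have hsrc : src (es ⟨m, by omega⟩) = tgt (es' ⟨m - 1, Nat.sub_lt hmpos Nat.one_pos⟩) := by
        have := hchain (m - 1) (by omega)
        have heq : (⟨m - 1 + 1, by omega⟩ : Fin (m + 1)) = ⟨m, by omega⟩ := by
          apply Fin.ext
          simp
          omega
        rw [heq] at this
        rw [← this]
        rfl
      have := PathTo.cons (es ⟨m, by omega⟩) hp hsrc
      rw [hofn]
      have htgt : (⟨m + 1 - 1, by omega⟩ : Fin (m + 1)) = ⟨m, by omega⟩ := by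
        apply Fin.ext
        simp
      rw [htgt]
      exact this

lemma staged_finite_path (n : ℕ) {q : Q} (hq : q ≠ qhat)
    (h : staged qhat src tgt w guard (n + 1) q < ⊤) :
    ∃ l : List E, PathTo qhat src tgt q l ∧
      ∀ e ∈ l, ∀ g : Q, guard e = some g →
        (∃ e' : E, guard e' = some g) ∧ staged qhat src tgt w guard n g < ⊤ := by
  rw [staged_succ_eq, if_neg hq] at h
  simp only [iInf_lt_iff] at h
  obtain ⟨m, hm, es, ts, hfe, -⟩ := h
  obtain ⟨h1, h2, h3, h4, h5, h6⟩ := hfe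
  refine ⟨List.ofFn es, ?_, ?_⟩
  · have := chain_path qhat src tgt m hm es h1 h3
    rwa [h2] at this
  · intro e he g hg
    obtain ⟨i, rfl⟩ : ∃ i, es i = e := by simpa [List.mem_ofFn] using he
    exact ⟨⟨es i, hg⟩, lt_of_le_of_lt (h6 i g hg) ENNReal.coe_lt_top⟩

lemma staged_le_of_path (n : ℕ) (B : NNReal) {q : Q} {l : List E}
    (hl : l ≠ []) (hp : PathTo qhat src tgt q l)
    (hg : ∀ e ∈ l, ∀ g : Q, guard e = some g →
      staged qhat src tgt w guard n g ≤ (B : ℝ≥0∞)) :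
    staged qhat src tgt w guard (n + 1) q ≤
      (B : ℝ≥0∞) + (l.map fun e => ((w e : ℝ≥0∞))).sum := by
  by_cases hq : q = qhat
  · subst hq; rw [staged_qhat]; exact zero_le
  have hm : 0 < l.length := List.length_pos_iff.mpr hl
  obtain ⟨h1, h2, h3⟩ := path_chain qhat src tgt hp hm
  set m := l.length with hmdef
  set es : Fin m → E := fun i => l.get i with hes
  set ts : Fin m → NNReal := fun i => B + ((l.map w).take (i + 1)).sum with hts
  have hlenmap : (l.map w).length = m := by simp [hmdef]
  have hgetmap : ∀ (i : ℕ) (hi : i < m), (l.map w).get ⟨i, by omega⟩ = w (l.get ⟨i, hi⟩) := by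
    intro i hi
    simp
  have hfe : Feasible qhat src tgt w guard (staged qhat src tgt w guard n) q m hm es ts := by
    refine ⟨h1, h2, h3, ?_, ?_, ?_⟩
    · show w (es ⟨0, hm⟩) ≤ B + ((l.map w).take 1).sum
      have : ((l.map w).take 1).sum = ((l.map w).take 0).sum + (l.map w).get ⟨0, by omega⟩ :=
        List.sum_take_succ _ 0 (by omega)
      rw [this, hgetmap 0 hm]
      simp [es]
    · intro i hi
      show ts ⟨i, by omega⟩ + w (es ⟨i + 1, hi⟩) ≤ ts ⟨i + 1, hi⟩
      have : ((l.map w).take (i + 2)).sum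
          = ((l.map w).take (i + 1)).sum + (l.map w).get ⟨i + 1, by omega⟩ :=
        List.sum_take_succ _ (i + 1) (by omega)
      rw [hts]
      simp only []
      rw [this, hgetmap (i + 1) hi]
      simp [es, add_assoc]
    · intro i g hgu
      refine (hg (es i) (List.get_mem l i) g hgu).trans ?_
      rw [hts]
      simp only [ENNReal.coe_add]
      exact le_self_add
  have harr : (ts ⟨m - 1, Nat.sub_lt hm Nat.one_pos⟩ : ℝ≥0∞)
      = (B : ℝ≥0∞) + ((l.map w).sum : ℝ≥0∞) := by
    have : m - 1 + 1 = m := by omega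
    rw [hts]
    simp only [this]
    rw [List.take_of_length_le (by simp [hmdef])]
    push_cast
    rfl
  have hsum := coe_sum_map (E := E) w l
  rw [staged_succ_eq, if_neg hq]
  refine iInf_le_of_le m <| iInf_le_of_le hm <| iInf_le_of_le es <| iInf_le_of_le ts <|
    le_trans (iInf_le _ hfe) ?_
  rw [harr, hsum]

end AuxLemmas

theorem stmt_13 {Q E : Type*} [Fintype Q] [Fintype E] [DecidableEq Q]
    (qhat : Q) (src tgt : E → Q) (w : E → NNReal) (guard : E → Option Q)
    (δ : NNReal)
    -- restricted-distance hypothesis: whenever `q` is reachable using only guards in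
    -- `S ⊆ G`, it is so reachable by a path of total weight at most `δ`
    (hrestr : ∀ S : Set Q, S ⊆ { g : Q | ∃ e : E, guard e = some g } →
      ∀ q : Q,
      (∃ es : List E, PathTo qhat src tgt q es ∧
        ∀ e ∈ es, ∀ g : Q, guard e = some g → g ∈ S) →
      (∃ es : List E, PathTo qhat src tgt q es ∧
        (∀ e ∈ es, ∀ g : Q, guard e = some g → g ∈ S) ∧
        ((es.map fun e => (w e : ℝ≥0∞)).sum ≤ (δ : ℝ≥0∞)))) :
    ∀ (n : ℕ) (q : Q), staged qhat src tgt w guard n q < ⊤ →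
      staged qhat src tgt w guard n q ≤
        (δ : ℝ≥0∞) * ((Nat.card { g : Q // ∃ e : E, guard e = some g } : ℝ≥0∞) + 1) := by
  classical
  set T := staged qhat src tgt w guard with hT
  set G : Finset Q := Finset.univ.filter (fun g => ∃ e : E, guard e = some g) with hG
  set S : ℕ → Finset Q := fun n =>
    Finset.univ.filter (fun g => (∃ e : E, guard e = some g) ∧ T n g < ⊤) with hS
  have hSmono : ∀ {k n : ℕ}, k ≤ n → S k ⊆ S n := by
    intro k n hkn g hg
    simp only [hS, Finset.mem_filter, Finset.mem_univ, true_and] at hg ⊢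
    exact ⟨hg.1, lt_of_le_of_lt (staged_anti qhat src tgt w guard g hkn) hg.2⟩
  have hScard : ∀ n, (S n).card ≤ G.card := by
    intro n
    refine Finset.card_le_card fun g hg => ?_
    simp only [hS, hG, Finset.mem_filter, Finset.mem_univ, true_and] at hg ⊢
    exact hg.1
  have hGcard : (Nat.card { g : Q // ∃ e : E, guard e = some g }) = G.card := by
    rw [Nat.card_eq_fintype_card (α := { g : Q // ∃ e : E, guard e = some g }), hG]
    rw [Fintype.card_subtype (fun g => ∃ e : E, guard e = some g)]
  have key : ∀ n, ∀ q, T (n + 1) q < ⊤ → T (n + 1) q ≤ δ * (((S n).card : ℝ≥0∞) + 1) := by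
    intro n
    induction n using Nat.strong_induction_on with
    | _ n ih =>
      intro q hq
      by_cases hqh : q = qhat
      · subst hqh; rw [hT, staged_qhat]; exact zero_le
      obtain ⟨l0, hp0, hg0⟩ := staged_finite_path qhat src tgt w guard n hqh hq
      have hsub : (↑(S n) : Set Q) ⊆ { g : Q | ∃ e : E, guard e = some g } := by
        intro g hg
        simp only [hS, Finset.coe_filter, Set.mem_setOf_eq, Finset.mem_univ, true_and] at hg
        exact hg.1
      obtain ⟨l, hp, hgl, hwl⟩ := hrestr (↑(S n)) hsub q
        ⟨l0, hp0, fun e he g hg => by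
          simp only [hS, Finset.coe_filter, Set.mem_setOf_eq, Finset.mem_univ, true_and]
          exact hg0 e he g hg⟩
      have hlne : l ≠ [] := by
        intro h
        exact hqh (pathTo_nil_eq qhat src tgt (h ▸ hp))
      set Bt : ℝ≥0∞ := (S n).sup (fun g => T n g) with hBt
      have hBt_lt : Bt < ⊤ := by
        rw [hBt]
        refine Finset.sup_lt_iff (by simp) |>.mpr fun g hg => ?_
        simp only [hS, Finset.mem_filter, Finset.mem_univ, true_and] at hg
        exact hg.2
      have hBtle : Bt ≤ δ * ((S n).card : ℝ≥0∞) := by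
        rw [hBt]
        refine Finset.sup_le fun g hg => ?_
        simp only [hS, Finset.mem_filter, Finset.mem_univ, true_and] at hg
        obtain ⟨hgG, hfin⟩ := hg
        by_cases hgq : g = qhat
        · rw [hgq, hT, staged_qhat]; exact zero_le
        · have hex : ∃ k, T k g < ⊤ := ⟨n, hfin⟩
          have hk : T (Nat.find hex) g < ⊤ := Nat.find_spec hex
          have hk0 : Nat.find hex ≠ 0 := by
            intro h
            rw [h, hT] at hk
            simp [staged, hgq] at hk
          obtain ⟨k', hk'⟩ : ∃ k', Nat.find hex = k' + 1 := ⟨Nat.find hex - 1, by omega⟩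
          have hkn : k' + 1 ≤ n := by
            have := Nat.find_le (h := hex) hfin
            omega
          have h1 : T n g ≤ T (k' + 1) g := staged_anti qhat src tgt w guard g hkn
          have h2 : T (k' + 1) g ≤ δ * (((S k').card : ℝ≥0∞) + 1) :=
            ih k' (by omega) g (hk' ▸ hk)
          have hss : S k' ⊂ S n := by
            refine ⟨hSmono (by omega), fun hsub' => ?_⟩
            have hgmem : g ∈ S k' := hsub' (by
              simp only [hS, Finset.mem_filter, Finset.mem_univ, true_and]
              exact ⟨hgG, hfin⟩)
            simp only [hS, Finset.mem_filter, Finset.mem_univ, true_and] at hgmem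
            exact Nat.find_min hex (by omega) hgmem.2
          have hcard : (S k').card + 1 ≤ (S n).card := Finset.card_lt_card hss
          calc T n g ≤ δ * (((S k').card : ℝ≥0∞) + 1) := h1.trans h2
            _ ≤ δ * ((S n).card : ℝ≥0∞) := by
                refine mul_le_mul_right ?_ _
                have : (((S k').card + 1 : ℕ) : ℝ≥0∞) ≤ (((S n).card : ℕ) : ℝ≥0∞) :=
                  Nat.cast_le.mpr hcard
                simpa using this
      have hBcoe : ((Bt.toNNReal : ℝ≥0∞)) = Bt := ENNReal.coe_toNNReal hBt_lt.ne
      have hB := staged_le_of_path qhat src tgt w guard n Bt.toNNReal hlne hp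
        (fun e he g hg => by
          have hm : g ∈ S n := by
            have := hgl e he g hg
            simpa using this
          calc T n g ≤ Bt := Finset.le_sup (f := fun g => T n g) hm
            _ = _ := hBcoe.symm)
      calc T (n + 1) q ≤ (Bt.toNNReal : ℝ≥0∞) + (l.map fun e => ((w e : ℝ≥0∞))).sum := hB
        _ ≤ Bt + (δ : ℝ≥0∞) := by rw [hBcoe]; exact add_le_add_right hwl _
        _ ≤ δ * ((S n).card : ℝ≥0∞) + δ := add_le_add_left hBtle _
        _ = δ * (((S n).card : ℝ≥0∞) + 1) := by ring
  intro n q h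
  cases n with
  | zero =>
    by_cases hq : q = qhat
    · rw [hq, hT, staged_qhat]; exact zero_le
    · exfalso
      have h0 : T 0 q = ⊤ := by rw [hT]; simp [staged, hq]
      rw [h0] at h
      exact lt_irrefl _ h
  | succ n =>
    refine (key n q h).trans ?_
    refine mul_le_mul_right ?_ _
    rw [hGcard]
    have h1 : (((S n).card : ℕ) : ℝ≥0∞) ≤ ((G.card : ℕ) : ℝ≥0∞) := Nat.cast_le.mpr (hScard n)
    exact add_le_add_left h1 1
end
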